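/- Let G be a connected finite undirected multigraph with s, t ∈ V(G), s ≠ t, let W_0, …, W_{q+1} be the bundles of G, let Z ⊆ E(G) be a special (s,t)-cut, and let W_{a,b} be the strongly affected stretch. Then: (1) for every i < a, if W_i is unaffected by Z then W_i ⊆ R_s(Z); (2) for every i > b, if W_i is unaffected by Z then W_i ⊆ R_t(Z); (3) if W_{i,j} is a maximal stretch of affected bundles with j < a, then the left interface of W_{i,j} and the right interface of W_{i,j} are both contained in R_s(Z), and j − i + 1 ≤ 2·|{e ∈ Z : both endpoints of e lie in W_{i,j}}|; (4) if W_{i,j} is a maximal stretch of affected bundles with i > b, then both interfaces of W_{i,j} are contained in R_t(Z), and j − i + 1 ≤ 2·|{e ∈ Z : both endpoints of e lie in W_{i,j}}|. -/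

import Mathlib

/-!
A finite undirected multigraph (parallel edges allowed, no loops) is modelled by a
vertex type `V`, an edge type `E` (both finite) and an endpoint map `ends : E → Sym2 V`
such that no edge is a loop (`¬ (ends e).IsDiag`).
-/

namespace FlowAug

variable {V E : Type}

/-- Two vertices are adjacent in `G - X` if some edge outside `X` joins them. -/
def Adj (ends : E → Sym2 V) (X : Set E) (u v : V) : Prop :=
  ∃ e, e ∉ X ∧ ends e = s(u, v)

/-- Reachability in `G - X`. -/
def Reach (ends : E → Sym2 V) (X : Set E) : V → V → Prop :=
  Relation.ReflTransGen (Adj ends X)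

/-- `R_S(X)` : the set of vertices reachable from the vertex set `S` in `G - X`. -/
def RS (ends : E → Sym2 V) (X : Set E) (S : Set V) : Set V :=
  {v | ∃ u ∈ S, Reach ends X u v}

/-- `δ(S)` : the set of edges with exactly one endpoint in `S`. -/
def edgeBoundary (ends : E → Sym2 V) (S : Set V) : Set E :=
  {e | ∃ u v, ends e = s(u, v) ∧ u ∈ S ∧ v ∉ S}

/-- `X` is an `(S,T)`-cut. -/
def IsCut (ends : E → Sym2 V) (X : Set E) (S T : Set V) : Prop :=
  RS ends X S ∩ RS ends X T = ∅

/-- `X` is a minimal `(S,T)`-cut: no proper subset of `X` is an `(S,T)`-cut. -/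
def IsMinimalCut (ends : E → Sym2 V) (X : Set E) (S T : Set V) : Prop :=
  IsCut ends X S T ∧ ∀ Y : Set E, Y ⊂ X → ¬ IsCut ends Y S T

/-- `X` is an `(S,T)`-cut of minimum cardinality. -/
def IsMinimumCut (ends : E → Sym2 V) (X : Set E) (S T : Set V) : Prop :=
  IsCut ends X S T ∧ ∀ Y : Set E, IsCut ends Y S T → X.ncard ≤ Y.ncard

/-- `X` is an `(S,T)`-cut that is closest to `S`: every `(S,T)`-cut `X' ≠ X` with
`R_S(X') ⊆ R_S(X)` satisfies `|X'| > |X|`. -/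
def IsClosestCut (ends : E → Sym2 V) (X : Set E) (S T : Set V) : Prop :=
  IsCut ends X S T ∧
    ∀ X' : Set E, IsCut ends X' S T → X' ≠ X →
      RS ends X' S ⊆ RS ends X S → X.ncard < X'.ncard

/-- `λ_G(s,t)` : the minimum cardinality of an `(s,t)`-cut (equivalently, by Menger's
theorem, the maximum number of pairwise edge-disjoint `(s,t)`-paths). -/
noncomputable def lamCut (ends : E → Sym2 V) (s t : V) : ℕ :=
  sInf {n | ∃ X : Set E, IsCut ends X {s} {t} ∧ X.ncard = n}

/-- `Z_{s,t}` : the edges of `Z` with one endpoint in `R_s(Z)` and one in `R_t(Z)`. -/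
def Zst (ends : E → Sym2 V) (s t : V) (Z : Set E) : Set E :=
  {e | e ∈ Z ∧ ∃ u v, ends e = s(u, v) ∧ u ∈ RS ends Z {s} ∧ v ∈ RS ends Z {t}}

/-- `Z` is a special `(s,t)`-cut: `Z` is an `(s,t)`-cut and `Z_{s,t}` is an `(s,t)`-cut. -/
def IsSpecial (ends : E → Sym2 V) (s t : V) (Z : Set E) : Prop :=
  IsCut ends Z {s} {t} ∧ IsCut ends (Zst ends s t Z) {s} {t}

/-- `Z` is eligible for `(s,t)`: special, and every edge of `Z` has its endpoints in
different connected components of `G - Z`. -/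
def IsEligible (ends : E → Sym2 V) (s t : V) (Z : Set E) : Prop :=
  IsSpecial ends s t Z ∧ ∀ e ∈ Z, ∀ u v : V, ends e = s(u, v) → ¬ Reach ends Z u v

/-- `Z` is a star `(s,t)`-cut: an `(s,t)`-cut each of whose edges has exactly one
endpoint in `R_s(Z)`. -/
def IsStarCut (ends : E → Sym2 V) (s t : V) (Z : Set E) : Prop :=
  IsCut ends Z {s} {t} ∧
    ∀ e ∈ Z, ∃ u v : V, ends e = s(u, v) ∧ u ∈ RS ends Z {s} ∧ v ∉ RS ends Z {s}

/-- A path from `s` to `t` in the multigraph described by `ends`, given by its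
sequence of vertices and traversed edges. -/
structure MGPath (V E : Type) (ends : E → Sym2 V) (s t : V) where
  n : ℕ
  vert : Fin (n + 1) → V
  edge : Fin n → E
  vert_zero : vert 0 = s
  vert_last : vert (Fin.last n) = t
  ends_eq : ∀ i : Fin n, ends (edge i) = s(vert i.castSucc, vert i.succ)

/-- A family of paths is (pairwise) edge-disjoint: no edge is used twice, neither on
a single path nor on two different paths. -/
def EdgeDisjoint {ends : E → Sym2 V} {s t : V} {k : ℕ}
    (P : Fin k → MGPath V E ends s t) : Prop :=
  Function.Injective fun p : (Σ i : Fin k, Fin (P i).n) => (P p.1).edge p.2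

/-- `P` is a witnessing `(s,t)`-flow for `Z`: a family of `λ_G(s,t)` pairwise
edge-disjoint `(s,t)`-paths such that every edge of `Z_{s,t}` occurs on a path of `P`
and every path of `P` contains exactly one edge of `Z`. -/
def IsWitnessingFlow (ends : E → Sym2 V) (s t : V) (Z : Set E) {k : ℕ}
    (P : Fin k → MGPath V E ends s t) : Prop :=
  k = lamCut ends s t ∧ EdgeDisjoint P ∧
    (∀ e ∈ Zst ends s t Z, ∃ (i : Fin k) (j : Fin (P i).n), (P i).edge j = e) ∧
    ∀ i : Fin k, ∃! j : Fin (P i).n, (P i).edge j ∈ Z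

/-- The vertices occurring on the paths of a family `P`. -/
def pathVerts {ends : E → Sym2 V} {s t : V} {k : ℕ}
    (P : Fin k → MGPath V E ends s t) : Set V :=
  {v | ∃ (i : Fin k) (m : Fin ((P i).n + 1)), (P i).vert m = v}

/-- The edges occurring on the paths of a family `P`. -/
def pathEdges {ends : E → Sym2 V} {s t : V} {k : ℕ}
    (P : Fin k → MGPath V E ends s t) : Set E :=
  {e | ∃ (i : Fin k) (j : Fin (P i).n), (P i).edge j = e}

/-- The arcs obtained by orienting every edge of every path of `P` in the forward
direction (from `s` towards `t`). -/
def DirAdjOnFlow {ends : E → Sym2 V} {s t : V} {k : ℕ}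
    (P : Fin k → MGPath V E ends s t) (u v : V) : Prop :=
  ∃ (i : Fin k) (l : Fin (P i).n), (P i).vert l.castSucc = u ∧ (P i).vert l.succ = v

/-- `N[S]` : the closed neighborhood of `S`. -/
def closedNbhd (ends : E → Sym2 V) (S : Set V) : Set V :=
  S ∪ {v | ∃ u ∈ S, ∃ e : E, ends e = s(u, v)}

/-- `X` is the minimum `(s,t)`-cut closest to `s` among all minimum `(s,t)`-cuts
satisfying the property `P`. -/
def IsClosestMinCutAmong (ends : E → Sym2 V) (s t : V) (P : Set E → Prop)
    (X : Set E) : Prop :=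
  IsMinimumCut ends X {s} {t} ∧ P X ∧
    ∀ Y : Set E, IsMinimumCut ends Y {s} {t} → P Y → Y ≠ X →
      RS ends Y {s} ⊆ RS ends X {s} → X.ncard < Y.ncard

/-- `C 0, …, C p` is the canonical sequence of non-crossing minimum `(s,t)`-cuts:
`C 0` is the unique minimum `(s,t)`-cut closest to `s`; `C i` is the unique minimum
`(s,t)`-cut closest to `s` among all minimum `(s,t)`-cuts `X` with
`N[R_s(C (i-1))] ⊆ R_s(X)`; and `p` is the largest index for which such a cut exists. -/
def CanonSeq (ends : E → Sym2 V) (s t : V) (p : ℕ) (C : ℕ → Set E) : Prop :=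
  IsClosestMinCutAmong ends s t (fun _ => True) (C 0) ∧
    (∀ i : ℕ, 0 < i → i ≤ p →
      IsClosestMinCutAmong ends s t
        (fun X => closedNbhd ends (RS ends (C (i - 1)) {s}) ⊆ RS ends X {s}) (C i)) ∧
    ¬ ∃ X : Set E, IsMinimumCut ends X {s} {t} ∧
        closedNbhd ends (RS ends (C p) {s}) ⊆ RS ends X {s}

/-- The blocks `V_0, …, V_{p+1}` associated with the canonical sequence of cuts. -/
def blockOf (ends : E → Sym2 V) (s : V) (p : ℕ) (C : ℕ → Set E) (i : ℕ) : Set V :=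
  if i = 0 then RS ends (C 0) {s}
  else if i ≤ p then RS ends (C i) {s} \ RS ends (C (i - 1)) {s}
  else Set.univ \ RS ends (C p) {s}

/-- Adjacency inside the induced subgraph `G[B]`. -/
def AdjIn (ends : E → Sym2 V) (B : Set V) (u v : V) : Prop :=
  u ∈ B ∧ v ∈ B ∧ ∃ e : E, ends e = s(u, v)

/-- Reachability inside the induced subgraph `G[B]`. -/
def ReachIn (ends : E → Sym2 V) (B : Set V) : V → V → Prop :=
  Relation.ReflTransGen (AdjIn ends B)

/-- The induced subgraph `G[B]` is connected. -/
def ConnIn (ends : E → Sym2 V) (B : Set V) : Prop :=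
  ∀ u ∈ B, ∀ v ∈ B, ReachIn ends B u v

/-- The connected component of `u` in the induced subgraph `G[B]`. -/
def compIn (ends : E → Sym2 V) (B : Set V) (u : V) : Set V :=
  {v | v ∈ B ∧ ReachIn ends B u v}

/-- The set of connected components of the induced subgraph `G[B]`. -/
def componentsIn (ends : E → Sym2 V) (B : Set V) : Set (Set V) :=
  {K | ∃ u ∈ B, K = compIn ends B u}

/-- The union of the blocks `V_a, …, V_b`. -/
def unionBlocks (ends : E → Sym2 V) (s : V) (p : ℕ) (C : ℕ → Set E)
    (a b : ℕ) : Set V :=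
  ⋃ j ∈ Set.Icc a b, blockOf ends s p C j

/-- `st` encodes the decomposition of the blocks `V_0, …, V_{p+1}` into bundles
`W_0, …, W_{q+1}`: bundle `W_i` consists of the blocks `V_{st i}, …, V_{st (i+1) - 1}`.
`W_0 = V_0`, and each further bundle is greedily either a single connected block, or a
maximal union of contiguous blocks inducing a disconnected subgraph. -/
def IsBundleSeq (ends : E → Sym2 V) (s : V) (p : ℕ) (C : ℕ → Set E)
    (q : ℕ) (st : ℕ → ℕ) : Prop :=
  st 0 = 0 ∧ st 1 = 1 ∧ st (q + 2) = p + 2 ∧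
    (∀ i j : ℕ, i < j → j ≤ q + 2 → st i < st j) ∧
    ∀ i : ℕ, 1 ≤ i → i ≤ q + 1 →
      (st (i + 1) = st i + 1 ∧ ConnIn ends (blockOf ends s p C (st i))) ∨
      (¬ ConnIn ends (blockOf ends s p C (st i)) ∧
        ¬ ConnIn ends (unionBlocks ends s p C (st i) (st (i + 1) - 1)) ∧
        ∀ j : ℕ, st (i + 1) - 1 < j → j ≤ p + 1 →
          ConnIn ends (unionBlocks ends s p C (st i) j))

/-- The bundle `W_i`. -/
def bundleOf (ends : E → Sym2 V) (s : V) (p : ℕ) (C : ℕ → Set E) (st : ℕ → ℕ)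
    (i : ℕ) : Set V :=
  unionBlocks ends s p C (st i) (st (i + 1) - 1)

/-- `C'_i` : the cut (among `C_0, …, C_p`) separating bundle `W_i` from `W_{i+1}`. -/
def interCut (C : ℕ → Set E) (st : ℕ → ℕ) (i : ℕ) : Set E :=
  C (st (i + 1) - 1)

/-- A bundle `W` is unaffected by `Z` if `N[W]` is contained in a single connected
component of `G - Z`. -/
def Unaffected (ends : E → Sym2 V) (Z : Set E) (W : Set V) : Prop :=
  ∀ u ∈ closedNbhd ends W, ∀ v ∈ closedNbhd ends W, Reach ends Z u v

/-- The stretch `W_{a,b} = W_a ∪ ⋯ ∪ W_b` of bundles. -/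
def stretchSet (ends : E → Sym2 V) (s : V) (p : ℕ) (C : ℕ → Set E) (st : ℕ → ℕ)
    (a b : ℕ) : Set V :=
  ⋃ i ∈ Set.Icc a b, bundleOf ends s p C st i

/-- The left interface of a stretch starting at bundle `W_a`. -/
def leftInterface (ends : E → Sym2 V) (s : V) (p : ℕ) (C : ℕ → Set E) (st : ℕ → ℕ)
    (a : ℕ) : Set V :=
  if a = 0 then {s}
  else {v | v ∈ bundleOf ends s p C st a ∧ ∃ e ∈ interCut C st (a - 1), v ∈ ends e}

/-- The right interface of a stretch ending at bundle `W_b`. -/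
def rightInterface (ends : E → Sym2 V) (s t : V) (p : ℕ) (C : ℕ → Set E)
    (st : ℕ → ℕ) (q b : ℕ) : Set V :=
  if b = q + 1 then {t}
  else {v | v ∈ bundleOf ends s p C st b ∧ ∃ e ∈ interCut C st b, v ∈ ends e}

/-- `W_{a,b}` is a maximal stretch of bundles all affected by `Z`. -/
def MaxAffStretch (ends : E → Sym2 V) (s : V) (p : ℕ) (C : ℕ → Set E)
    (st : ℕ → ℕ) (q : ℕ) (Z : Set E) (a b : ℕ) : Prop :=
  a ≤ b ∧ b ≤ q + 1 ∧
    (∀ i : ℕ, a ≤ i → i ≤ b → ¬ Unaffected ends Z (bundleOf ends s p C st i)) ∧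
    (a = 0 ∨ Unaffected ends Z (bundleOf ends s p C st (a - 1))) ∧
    (b = q + 1 ∨ Unaffected ends Z (bundleOf ends s p C st (b + 1)))

/-- `W_{a,b}` is a maximal stretch of bundles affected by `Z` containing both a vertex
reachable from `s` and a vertex reachable from `t` in `G - Z`. -/
def StronglyAffStretch (ends : E → Sym2 V) (s t : V) (p : ℕ) (C : ℕ → Set E)
    (st : ℕ → ℕ) (q : ℕ) (Z : Set E) (a b : ℕ) : Prop :=
  MaxAffStretch ends s p C st q Z a b ∧
    (stretchSet ends s p C st a b ∩ RS ends Z {s}).Nonempty ∧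
    (stretchSet ends s p C st a b ∩ RS ends Z {t}).Nonempty

/-- Adjacency inside the induced subgraph `G[B]` avoiding the edge set `X`. -/
def AdjInX (ends : E → Sym2 V) (B : Set V) (X : Set E) (u v : V) : Prop :=
  u ∈ B ∧ v ∈ B ∧ ∃ e, e ∉ X ∧ ends e = s(u, v)

/-- Reachability inside `G[B] - X`. -/
def ReachInX (ends : E → Sym2 V) (B : Set V) (X : Set E) : V → V → Prop :=
  Relation.ReflTransGen (AdjInX ends B X)

/-- `X` is a star `(a,b)`-cut of the induced subgraph `H = G[B]`: in `H - X` no path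
connects `a` and `b`, and every edge of `X` has exactly one endpoint reachable from
`a` in `H - X`. -/
def IsStarCutIn (ends : E → Sym2 V) (B : Set V) (a b : V) (X : Set E) : Prop :=
  ¬ ReachInX ends B X a b ∧
    ∀ e ∈ X, ∃ u v : V, ends e = s(u, v) ∧
      ReachInX ends B X a u ∧ ¬ ReachInX ends B X a v

end FlowAug

namespace FlowAug

section Lemmas

variable {ends : E → Sym2 V}

lemma sym2_exists (z : Sym2 V) : ∃ x y : V, z = s(x, y) := by
  induction z using Sym2.ind with | _ x y => exact ⟨x, y, rfl⟩

noncomputable def ep1 (ends : E → Sym2 V) (e : E) : V := (sym2_exists (ends e)).choose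

noncomputable def ep2 (ends : E → Sym2 V) (e : E) : V :=
  (sym2_exists (ends e)).choose_spec.choose

lemma ep_spec (ends : E → Sym2 V) (e : E) : ends e = s(ep1 ends e, ep2 ends e) :=
  (sym2_exists (ends e)).choose_spec.choose_spec

lemma adj_symm {X : Set E} {u v : V} (h : Adj ends X u v) : Adj ends X v u := by
  obtain ⟨e, he, h2⟩ := h
  exact ⟨e, he, by rw [h2, Sym2.eq_swap]⟩

lemma reach_symm {X : Set E} {u v : V} (h : Reach ends X u v) : Reach ends X v u := by
  induction h with
  | refl => exact .refl
  | tail _ h2 ih => exact Relation.ReflTransGen.head (adj_symm h2) ih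

lemma reach_trans {X : Set E} {u v w : V} (h : Reach ends X u v) (h2 : Reach ends X v w) :
    Reach ends X u w := Relation.ReflTransGen.trans h h2

lemma reach_mono {X Y : Set E} (hXY : X ⊆ Y) {u v : V} (h : Reach ends Y u v) :
    Reach ends X u v := by
  induction h with
  | refl => exact .refl
  | tail _ h2 ih => exact ih.tail (by obtain ⟨e, he, h3⟩ := h2; exact ⟨e, fun hc => he (hXY hc), h3⟩)

lemma mem_RS {X : Set E} {s₀ v : V} : v ∈ RS ends X {s₀} ↔ Reach ends X s₀ v := by
  simp [RS]

lemma isCut_iff {X : Set E} {s₀ t₀ : V} :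
    IsCut ends X {s₀} {t₀} ↔ ¬ Reach ends X s₀ t₀ := by
  constructor
  · intro h hr
    have : t₀ ∈ RS ends X {s₀} ∩ RS ends X {t₀} := ⟨mem_RS.mpr hr, mem_RS.mpr .refl⟩
    simp [IsCut] at h
    exact (h.subset this).elim
  · intro h
    rw [IsCut, Set.eq_empty_iff_forall_notMem]
    rintro v ⟨h1, h2⟩
    exact h (reach_trans (mem_RS.mp h1) (reach_symm (mem_RS.mp h2)))

lemma reach_restore {X : Set E} {e : E} {x y u v : V} (hxy : ends e = s(x, y))
    (h : Reach ends (X \ {e}) u v) :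
    Reach ends X u v ∨ (Reach ends X u x ∧ Reach ends X y v) ∨
      (Reach ends X u y ∧ Reach ends X x v) := by
  induction h with
  | refl => exact Or.inl .refl
  | @tail w v' h1 h2 ih =>
    obtain ⟨f, hf, hends⟩ := h2
    by_cases hfe : f = e
    · subst hfe
      rw [hxy] at hends
      rcases Sym2.eq_iff.mp hends.symm with ⟨hw, hv⟩ | ⟨hw, hv⟩
      · -- w = x, v' = y
        subst hw; subst hv
        rcases ih with h | ⟨h1', h2'⟩ | ⟨h1', h2'⟩
        · exact Or.inr (Or.inl ⟨h, .refl⟩)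
        · exact Or.inr (Or.inl ⟨h1', .refl⟩)
        · exact Or.inl h1'
      · -- w = y, v' = x
        subst hw; subst hv
        rcases ih with h | ⟨h1', h2'⟩ | ⟨h1', h2'⟩
        · exact Or.inr (Or.inr ⟨h, .refl⟩)
        · exact Or.inl h1'
        · exact Or.inr (Or.inr ⟨h1', .refl⟩)
    · have hfX : f ∉ X := fun hc => hf ⟨hc, hfe⟩
      have hadj : Adj ends X w v' := ⟨f, hfX, hends⟩
      rcases ih with h | ⟨h1', h2'⟩ | ⟨h1', h2'⟩
      · exact Or.inl (h.tail hadj)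
      · exact Or.inr (Or.inl ⟨h1', h2'.tail hadj⟩)
      · exact Or.inr (Or.inr ⟨h1', h2'.tail hadj⟩)

lemma mincut_cross [Finite E] {X : Set E} {s₀ t₀ : V} (hX : IsMinimumCut ends X {s₀} {t₀}) {e : E}
    (he : e ∈ X) :
    ∃ x y, ends e = s(x, y) ∧ x ∈ RS ends X {s₀} ∧ y ∈ RS ends X {t₀} := by
  obtain ⟨x, y, hxy⟩ := sym2_exists (ends e)
  by_contra hcon
  push_neg at hcon
  have hcut : IsCut ends (X \ {e}) {s₀} {t₀} := by
    rw [isCut_iff]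
    intro hr
    rcases reach_restore hxy hr with h | ⟨h1, h2⟩ | ⟨h1, h2⟩
    · exact (isCut_iff.mp hX.1) h
    · exact hcon x y hxy (mem_RS.mpr h1) (mem_RS.mpr (reach_symm h2))
    · exact hcon y x (by rw [hxy, Sym2.eq_swap]) (mem_RS.mpr h1) (mem_RS.mpr (reach_symm h2))
  have := hX.2 _ hcut
  have hlt : (X \ {e}).ncard < X.ncard := Set.ncard_diff_singleton_lt_of_mem he (Set.toFinite X)
  omega

lemma cut_nonempty {X : Set E} {s₀ t₀ : V} (hX : IsCut ends X {s₀} {t₀})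
    (hconn : Reach ends (∅ : Set E) s₀ t₀) : X.Nonempty := by
  rcases Set.eq_empty_or_nonempty X with rfl | h
  · exact absurd hconn (isCut_iff.mp hX)
  · exact h

lemma reachIn_symm {B : Set V} {u v : V} (h : ReachIn ends B u v) : ReachIn ends B v u := by
  induction h with
  | refl => exact .refl
  | tail _ h2 ih =>
    obtain ⟨h3, h4, e, he⟩ := h2
    exact Relation.ReflTransGen.head ⟨h4, h3, e, by rw [he, Sym2.eq_swap]⟩ ih

lemma reachIn_mono {B B' : Set V} (hB : B ⊆ B') {u v : V} (h : ReachIn ends B u v) :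
    ReachIn ends B' u v := by
  induction h with
  | refl => exact .refl
  | tail _ h2 ih => exact ih.tail ⟨hB h2.1, hB h2.2.1, h2.2.2⟩

lemma conn_congr {A B : Set V} (h : A = B) (hc : ConnIn ends A) : ConnIn ends B := h ▸ hc

lemma relay {Z : Set E} {U : Set V} (hU : ConnIn ends U)
    (hedge : ∀ f ∈ Z, ∀ x y : V, ends f = s(x, y) → x ∈ U → y ∈ U → Reach ends Z x y)
    {u v : V} (hu : u ∈ U) (hv : v ∈ U) : Reach ends Z u v := by
  have h := hU u hu v hv
  clear hu hv
  induction h with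
  | refl => exact .refl
  | tail _ h2 ih =>
    obtain ⟨hw, hv', f, hf⟩ := h2
    by_cases hfZ : f ∈ Z
    · exact reach_trans ih (hedge f hfZ _ _ hf hw hv')
    · exact ih.tail ⟨f, hfZ, hf⟩

end Lemmas

set_option linter.unusedSectionVars false

noncomputable def bidx (ends : E → Sym2 V) (s : V) (p : ℕ) (C : ℕ → Set E) (v : V) : ℕ :=
  sInf {i | (i ≤ p ∧ v ∈ RS ends (C i) {s}) ∨ i = p + 1}

noncomputable def bdl (ends : E → Sym2 V) (s : V) (p : ℕ) (C : ℕ → Set E)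
    (st : ℕ → ℕ) (v : V) : ℕ :=
  sInf {i | bidx ends s p C v < st (i + 1)}

section Struct

variable [Fintype V] [Fintype E] {ends : E → Sym2 V} {s t : V} {p : ℕ} {C : ℕ → Set E}

lemma RS_closed {X : Set E} {S : Set V} {f : E} {u v : V} (hf : f ∉ X)
    (h : ends f = s(u, v)) (hu : u ∈ RS ends X S) : v ∈ RS ends X S := by
  obtain ⟨w, hw, hr⟩ := hu; exact ⟨w, hw, hr.tail ⟨f, hf, h⟩⟩

variable (hC : CanonSeq ends s t p C)
include hC

lemma cmin (m : ℕ) (hm : m ≤ p) : IsMinimumCut ends (C m) {s} {t} := by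
  rcases Nat.eq_zero_or_pos m with rfl | h
  · exact hC.1.1
  · exact (hC.2.1 m h hm).1

lemma cnb (i : ℕ) (h : i + 1 ≤ p) :
    closedNbhd ends (RS ends (C i) {s}) ⊆ RS ends (C (i + 1)) {s} := by
  have h2 := (hC.2.1 (i + 1) (by omega) h).2.1
  simpa using h2

lemma Rstep (i : ℕ) (h : i + 1 ≤ p) :
    RS ends (C i) {s} ⊆ RS ends (C (i + 1)) {s} :=
  fun _ hv => cnb hC i h (Or.inl hv)

lemma Rmono {i j : ℕ} (hij : i ≤ j) (hj : j ≤ p) :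
    RS ends (C i) {s} ⊆ RS ends (C j) {s} :=
  Nat.le_induction (fun _ => subset_rfl)
    (fun n hn ih hp => (ih (by omega)).trans (Rstep hC n (by omega))) j hij hj

omit hC in
lemma bidx_le (v : V) : bidx ends s p C v ≤ p + 1 := Nat.sInf_le (Or.inr rfl)

omit hC in
lemma bidx_le_of_mem {m : ℕ} (hm : m ≤ p) {v : V} (hv : v ∈ RS ends (C m) {s}) :
    bidx ends s p C v ≤ m := Nat.sInf_le (Or.inl ⟨hm, hv⟩)

include hC

lemma mem_of_bidx_le {m : ℕ} {v : V} (h : bidx ends s p C v ≤ m) (hm : m ≤ p) :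
    v ∈ RS ends (C m) {s} := by
  have hspec := Nat.sInf_mem (⟨p + 1, Or.inr rfl⟩ :
    Set.Nonempty {i | (i ≤ p ∧ v ∈ RS ends (C i) {s}) ∨ i = p + 1})
  rcases hspec with ⟨h1, h2⟩ | h1
  · exact Rmono hC h hm h2
  · rw [bidx] at h; omega

omit hC in
lemma bidx_s : bidx ends s p C s = 0 :=
  Nat.le_zero.mp (Nat.sInf_le (Or.inl ⟨Nat.zero_le p, mem_RS.mpr .refl⟩))

lemma edge_bidx {e : E} {u v : V} (h : ends e = s(u, v)) :
    bidx ends s p C v ≤ bidx ends s p C u + 1 := by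
  by_cases hu : bidx ends s p C u + 1 ≤ p
  · have hum : u ∈ RS ends (C (bidx ends s p C u)) {s} := mem_of_bidx_le hC le_rfl (by omega)
    have : v ∈ RS ends (C (bidx ends s p C u + 1)) {s} :=
      cnb hC _ hu (Or.inr ⟨u, hum, e, h⟩)
    exact bidx_le_of_mem hu this
  · have := bidx_le (C := C) (s := s) (p := p) (ends := ends) v; omega

lemma crossing (m : ℕ) (hm : m ≤ p) {e : E} (he : e ∈ C m) :
    ∃ x y, ends e = s(x, y) ∧ bidx ends s p C x = m ∧ bidx ends s p C y = m + 1 := by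
  obtain ⟨x, y, hxy, hx, hy⟩ := mincut_cross (cmin hC m hm) he
  have hxm : bidx ends s p C x ≤ m := bidx_le_of_mem hm hx
  have hynot : y ∉ RS ends (C m) {s} := by
    intro hc
    have hcut := (cmin hC m hm).1
    rw [IsCut, Set.eq_empty_iff_forall_notMem] at hcut
    exact hcut y ⟨hc, hy⟩
  have hym : ¬ bidx ends s p C y ≤ m := fun hc => hynot (mem_of_bidx_le hC hc hm)
  have hy1 : bidx ends s p C y ≤ bidx ends s p C x + 1 := edge_bidx hC hxy
  have hxe : bidx ends s p C x = m := by
    by_contra hne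
    have hxmem : x ∈ RS ends (C (bidx ends s p C x)) {s} := mem_of_bidx_le hC le_rfl (by omega)
    have hy2 : y ∈ RS ends (C (bidx ends s p C x + 1)) {s} :=
      cnb hC _ (by omega) (Or.inr ⟨x, hxmem, e, hxy⟩)
    have := bidx_le_of_mem (show bidx ends s p C x + 1 ≤ p by omega) hy2
    omega
  exact ⟨x, y, hxy, hxe, by omega⟩

lemma mem_blockOf {m : ℕ} (hm : m ≤ p + 1) {v : V} :
    v ∈ blockOf ends s p C m ↔ bidx ends s p C v = m := by
  unfold blockOf
  split_ifs with h0 hp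
  · subst h0
    constructor
    · intro hv
      have := bidx_le_of_mem (Nat.zero_le p) hv; omega
    · intro hv
      exact mem_of_bidx_le hC (by omega) (Nat.zero_le p)
  · constructor
    · rintro ⟨h1, h2⟩
      have e1 := bidx_le_of_mem hp h1
      have e2 : ¬ bidx ends s p C v ≤ m - 1 :=
        fun hc => h2 (mem_of_bidx_le hC hc (by omega))
      omega
    · intro hv
      refine ⟨mem_of_bidx_le hC (by omega) hp, fun hc => ?_⟩
      have := bidx_le_of_mem (show m - 1 ≤ p by omega) hc; omega
  · have hmp : m = p + 1 := by omega
    constructor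
    · rintro ⟨-, h2⟩
      have h3 : ¬ bidx ends s p C v ≤ p := fun hc => h2 (mem_of_bidx_le hC hc le_rfl)
      have := bidx_le (C := C) (s := s) (p := p) (ends := ends) v; omega
    · intro hv
      refine ⟨trivial, fun hc => ?_⟩
      have := bidx_le_of_mem le_rfl hc; omega

lemma mem_unionBlocks_iff {c d : ℕ} (hd : d ≤ p + 1) {v : V} :
    v ∈ unionBlocks ends s p C c d ↔
      c ≤ bidx ends s p C v ∧ bidx ends s p C v ≤ d := by
  simp only [unionBlocks, Set.mem_iUnion, Set.mem_Icc, exists_prop]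
  constructor
  · rintro ⟨k, ⟨h1, h2⟩, hk⟩
    have := (mem_blockOf hC (by omega)).mp hk; omega
  · rintro ⟨h1, h2⟩
    exact ⟨_, ⟨h1, h2⟩, (mem_blockOf hC (by omega)).mpr rfl⟩

lemma anchor (hconn : ∀ u v : V, Reach ends (∅ : Set E) u v) {m : ℕ} (h1 : 1 ≤ m)
    (h2 : m ≤ p + 1) {v : V} (hv : bidx ends s p C v = m) :
    ∃ x y f, ends f = s(x, y) ∧ bidx ends s p C x = m - 1 ∧ bidx ends s p C y = m ∧
      ReachIn ends (blockOf ends s p C m) y v := by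
  have step : ∀ (X : Set E), (∀ w, Reach ends X s w → bidx ends s p C w ≤ m) →
      ∀ v : V, Reach ends X s v → bidx ends s p C v = m →
      ∃ x y f, ends f = s(x, y) ∧ bidx ends s p C x = m - 1 ∧ bidx ends s p C y = m ∧
        ReachIn ends (blockOf ends s p C m) y v := by
    intro X hXb v hr
    induction hr with
    | refl =>
      intro hs0
      have hb := bidx_s (C := C) (p := p) (ends := ends) (s := s); omega
    | @tail u v' h1' h2' ih =>
      intro hv'
      obtain ⟨f, hfX, hf⟩ := h2'
      have hu_le : bidx ends s p C u ≤ m := hXb u h1'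
      rcases eq_or_lt_of_le hu_le with heq | hlt
      · obtain ⟨x, y, f', hxy, hbx, hby, hry⟩ := ih heq
        exact ⟨x, y, f', hxy, hbx, hby,
          hry.tail ⟨(mem_blockOf hC h2).mpr heq, (mem_blockOf hC h2).mpr hv', f, hf⟩⟩
      · have humem : u ∈ RS ends (C (m - 1)) {s} := mem_of_bidx_le hC (by omega) (by omega)
        have hvnot : v' ∉ RS ends (C (m - 1)) {s} := fun hc => by
          have := bidx_le_of_mem (show m - 1 ≤ p by omega) hc; omega
        have hfC : f ∈ C (m - 1) := by
          by_contra hfc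
          exact hvnot (RS_closed hfc hf humem)
        obtain ⟨x, y, hxy, hbx, hby⟩ := crossing hC (m - 1) (by omega) hfC
        have hmatch : (u = x ∧ v' = y) ∨ (u = y ∧ v' = x) :=
          Sym2.eq_iff.mp (hf.symm.trans hxy)
        rcases hmatch with ⟨rfl, rfl⟩ | ⟨rfl, rfl⟩
        · exact ⟨u, v', f, hf, by omega, by omega, .refl⟩
        · omega
  rcases le_or_gt m p with hmp | hmp
  · exact step (C m) (fun w hw => bidx_le_of_mem hmp (mem_RS.mpr hw)) v
      (mem_RS.mp (mem_of_bidx_le hC (by omega) hmp)) hv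
  · exact step ∅ (fun w _ => by have := bidx_le (C := C) (s := s) (p := p) (ends := ends) w; omega) v (hconn s v) hv

lemma conn0 : ConnIn ends (blockOf ends s p C 0) := by
  have key : ∀ v, Reach ends (C 0) s v → ReachIn ends (blockOf ends s p C 0) s v := by
    intro v hr
    induction hr with
    | refl => exact .refl
    | @tail u v' h1 h2 ih =>
      obtain ⟨f, hf, hends⟩ := h2
      have hu : u ∈ RS ends (C 0) {s} := mem_RS.mpr h1
      have hv' : v' ∈ RS ends (C 0) {s} := RS_closed hf hends hu
      refine ih.tail ⟨(mem_blockOf hC (by omega)).mpr ?_, (mem_blockOf hC (by omega)).mpr ?_, f, hends⟩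
      · have := bidx_le_of_mem (Nat.zero_le p) hu; omega
      · have := bidx_le_of_mem (Nat.zero_le p) hv'; omega
  intro u hu v hv
  rw [mem_blockOf hC (by omega)] at hu hv
  have hu' : Reach ends (C 0) s u := mem_RS.mp (mem_of_bidx_le hC (by omega) (Nat.zero_le p))
  have hv' : Reach ends (C 0) s v := mem_RS.mp (mem_of_bidx_le hC (by omega) (Nat.zero_le p))
  exact (reachIn_symm (key u hu')).trans (key v hv')

lemma ext_conn (hconn : ∀ u v : V, Reach ends (∅ : Set E) u v) {c d : ℕ} (hcd : c ≤ d)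
    (hd : d + 1 ≤ p + 1) (h : ConnIn ends (unionBlocks ends s p C c d)) :
    ConnIn ends (unionBlocks ends s p C c (d + 1)) := by
  have hsub : unionBlocks ends s p C c d ⊆ unionBlocks ends s p C c (d + 1) := by
    intro w hw
    rw [mem_unionBlocks_iff hC (by omega)] at hw
    rw [mem_unionBlocks_iff hC (by omega)]
    omega
  have hbsub : blockOf ends s p C (d + 1) ⊆ unionBlocks ends s p C c (d + 1) := by
    intro w hw
    rw [mem_blockOf hC (by omega)] at hw
    rw [mem_unionBlocks_iff hC (by omega)]
    omega
  have anch : ∀ w ∈ unionBlocks ends s p C c (d + 1),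
      ∃ x ∈ unionBlocks ends s p C c d, ReachIn ends (unionBlocks ends s p C c (d + 1)) x w := by
    intro w hw
    rw [mem_unionBlocks_iff hC (by omega)] at hw
    by_cases hwd : bidx ends s p C w ≤ d
    · exact ⟨w, (mem_unionBlocks_iff hC (by omega)).mpr ⟨hw.1, hwd⟩, .refl⟩
    · have hwe : bidx ends s p C w = d + 1 := by omega
      obtain ⟨x, y, f, hxy, hbx, hby, hry⟩ := anchor hC hconn (by omega) hd hwe
      refine ⟨x, (mem_unionBlocks_iff hC (by omega)).mpr ⟨by omega, by omega⟩, ?_⟩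
      refine Relation.ReflTransGen.head ⟨?_, ?_, f, hxy⟩ (reachIn_mono hbsub hry)
      · rw [mem_unionBlocks_iff hC (by omega)]; omega
      · rw [mem_unionBlocks_iff hC (by omega)]; omega
  intro u hu v hv
  obtain ⟨xu, hxu, hru⟩ := anch u hu
  obtain ⟨xv, hxv, hrv⟩ := anch v hv
  exact ((reachIn_symm hru).trans (reachIn_mono hsub (h _ hxu _ hxv))).trans hrv

lemma ext_iter (hconn : ∀ u v : V, Reach ends (∅ : Set E) u v) {c d₀ : ℕ}
    (h0 : ConnIn ends (unionBlocks ends s p C c d₀)) (hc : c ≤ d₀) :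
    ∀ d, d₀ ≤ d → d ≤ p + 1 → ConnIn ends (unionBlocks ends s p C c d) := by
  intro d hd
  exact Nat.le_induction (fun _ => h0)
    (fun n hn ih hp => ext_conn hC hconn (by omega) (by omega) (ih (by omega))) d hd

lemma union_single {m : ℕ} (hm : m ≤ p + 1) :
    unionBlocks ends s p C m m = blockOf ends s p C m := by
  ext v
  rw [mem_unionBlocks_iff hC hm, mem_blockOf hC hm]
  omega

lemma block_nonempty (hconn : ∀ u v : V, Reach ends (∅ : Set E) u v) {m : ℕ}
    (hm : m ≤ p + 1) : ∃ v, bidx ends s p C v = m := by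
  rcases Nat.eq_zero_or_pos m with rfl | h
  · exact ⟨s, bidx_s⟩
  · obtain ⟨e, he⟩ := cut_nonempty (cmin hC (m - 1) (by omega)).1 (hconn s t)
    obtain ⟨x, y, hxy, hbx, hby⟩ := crossing hC (m - 1) (by omega) he
    exact ⟨y, by omega⟩

end Struct

section Bundles

variable [Fintype V] [Fintype E] {ends : E → Sym2 V} {s t : V} {p : ℕ} {C : ℕ → Set E}
  {q : ℕ} {st : ℕ → ℕ}

variable (hW : IsBundleSeq ends s p C q st)
include hW

lemma stlt {i j : ℕ} (hij : i < j) (hj : j ≤ q + 2) : st i < st j := hW.2.2.2.1 i j hij hj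

lemma stle {i j : ℕ} (hij : i ≤ j) (hj : j ≤ q + 2) : st i ≤ st j := by
  rcases eq_or_lt_of_le hij with rfl | h
  · exact le_rfl
  · exact le_of_lt (stlt hW h hj)

lemma st_top : st (q + 2) = p + 2 := hW.2.2.1

lemma st_le_p2 {i : ℕ} (hi : i ≤ q + 2) : st i ≤ p + 2 := by
  have := stle hW hi le_rfl; rw [st_top hW] at this; exact this

lemma st_le_p1 {i : ℕ} (hi : i ≤ q + 1) : st i ≤ p + 1 := by
  have := stlt hW (show i < q + 2 by omega) le_rfl; rw [st_top hW] at this; omega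

lemma st_pos {i : ℕ} (hi : 1 ≤ i) (hi2 : i ≤ q + 2) : 1 ≤ st i := by
  rcases eq_or_lt_of_le hi with h | h
  · rw [← h, hW.2.1]
  · have := stlt hW (show 1 < i from h) hi2; rw [hW.2.1] at this; omega

lemma bdl_lt (v : V) : bidx ends s p C v < st (bdl ends s p C st v + 1) := by
  have hne : Set.Nonempty {i | bidx ends s p C v < st (i + 1)} := by
    refine ⟨q + 1, ?_⟩
    have h1 := bidx_le (C := C) (s := s) (p := p) (ends := ends) v
    have h2 := st_top hW
    have h3 : st (q + 1 + 1) = st (q + 2) := rfl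
    simp only [Set.mem_setOf_eq]
    omega
  exact Nat.sInf_mem hne

omit hW in
lemma bdl_le_of {v : V} {i : ℕ} (h : bidx ends s p C v < st (i + 1)) :
    bdl ends s p C st v ≤ i := Nat.sInf_le h

lemma bdl_le (v : V) : bdl ends s p C st v ≤ q + 1 := by
  refine bdl_le_of ?_
  have h1 := bidx_le (C := C) (s := s) (p := p) (ends := ends) v
  have h2 := st_top hW
  have h3 : st (q + 1 + 1) = st (q + 2) := rfl
  omega

lemma st_bdl_le (v : V) : st (bdl ends s p C st v) ≤ bidx ends s p C v := by
  rcases Nat.eq_zero_or_pos (bdl ends s p C st v) with h | h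
  · rw [h, hW.1]; omega
  · have hmem := Nat.notMem_of_lt_sInf
      (show bdl ends s p C st v - 1 < sInf {i | bidx ends s p C v < st (i + 1)} from by
        rw [← bdl]; omega)
    simp only [Set.mem_setOf_eq] at hmem
    have h2 : bdl ends s p C st v - 1 + 1 = bdl ends s p C st v := by omega
    rw [h2] at hmem
    omega

lemma bdl_eq_iff {i : ℕ} (hi : i ≤ q + 1) {v : V} :
    bdl ends s p C st v = i ↔ st i ≤ bidx ends s p C v ∧ bidx ends s p C v < st (i + 1) := by
  constructor
  · rintro rfl
    exact ⟨st_bdl_le hW v, bdl_lt hW v⟩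
  · rintro ⟨h1, h2⟩
    have hle := bdl_le_of (st := st) h2
    by_contra hne
    have hlt : bdl ends s p C st v < i := by omega
    have := bdl_lt hW v
    have := stle hW (show bdl ends s p C st v + 1 ≤ i by omega) (by omega)
    omega

variable (hC : CanonSeq ends s t p C)
include hC

lemma mem_bundleOf {i : ℕ} (hi : i ≤ q + 1) {v : V} :
    v ∈ bundleOf ends s p C st i ↔ bdl ends s p C st v = i := by
  unfold bundleOf
  rw [mem_unionBlocks_iff hC (by have := st_le_p2 hW (show i + 1 ≤ q + 2 by omega); omega)]
  rw [bdl_eq_iff hW hi]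
  have := st_pos hW (show 1 ≤ i + 1 by omega) (by omega)
  omega

lemma bundle_nonempty (hconn : ∀ u v : V, Reach ends (∅ : Set E) u v) {i : ℕ}
    (hi : i ≤ q + 1) : ∃ w, bdl ends s p C st w = i := by
  obtain ⟨w, hw⟩ := block_nonempty hC hconn (show st i ≤ p + 1 from st_le_p1 hW hi)
  refine ⟨w, (bdl_eq_iff hW hi).mpr ?_⟩
  rw [hw]
  exact ⟨le_rfl, stlt hW (by omega) (by omega)⟩

lemma edge_bdl {e : E} {u v : V} (h : ends e = s(u, v)) :
    bdl ends s p C st v ≤ bdl ends s p C st u + 1 := by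
  by_cases hbu : bdl ends s p C st u ≤ q
  · have h1 : bidx ends s p C v ≤ bidx ends s p C u + 1 := edge_bidx hC h
    have h2 := bdl_lt hW u
    have h3 : st (bdl ends s p C st u + 1) < st (bdl ends s p C st u + 2) :=
      stlt hW (by omega) (by omega)
    have h4 : st (bdl ends s p C st u + 1 + 1) = st (bdl ends s p C st u + 2) := rfl
    exact bdl_le_of (by omega)
  · have := bdl_le hW v; have := bdl_le hW u; omega

omit hC in
lemma bdl_s : bdl ends s p C st s = 0 := by
  have h1 : bidx ends s p C s = 0 := bidx_s
  have : bdl ends s p C st s ≤ 0 := bdl_le_of (by rw [h1]; rw [show st (0+1) = 1 from hW.2.1]; omega)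
  omega

lemma bdl_t : bdl ends s p C st t = q + 1 := by
  have h1 : bidx ends s p C t = p + 1 := by
    have h2 : ¬ bidx ends s p C t ≤ p := by
      intro hc
      have hm : t ∈ RS ends (C p) {s} := mem_of_bidx_le hC hc le_rfl
      have hcut := (cmin hC p le_rfl).1
      rw [IsCut, Set.eq_empty_iff_forall_notMem] at hcut
      exact hcut t ⟨hm, mem_RS.mpr .refl⟩
    have := bidx_le (C := C) (s := s) (p := p) (ends := ends) t
    omega
  refine (bdl_eq_iff hW le_rfl).mpr ?_
  rw [h1]
  constructor
  · have := st_le_p1 hW (show q + 1 ≤ q + 1 from le_rfl); omega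
  · rw [st_top hW]; omega

lemma mem_stretch {a' b' : ℕ} (hb : b' ≤ q + 1) {v : V} :
    v ∈ stretchSet ends s p C st a' b' ↔
      a' ≤ bdl ends s p C st v ∧ bdl ends s p C st v ≤ b' := by
  simp only [stretchSet, Set.mem_iUnion, Set.mem_Icc, exists_prop]
  constructor
  · rintro ⟨l, ⟨h1, h2⟩, hl⟩
    rw [mem_bundleOf hW hC (by omega)] at hl
    omega
  · rintro ⟨h1, h2⟩
    exact ⟨_, ⟨h1, h2⟩, (mem_bundleOf hW hC (by omega)).mpr rfl⟩

lemma reach_cross {X : Set E} {u v : V} {m : ℕ} (h : Reach ends X u v)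
    (h1 : bdl ends s p C st u ≤ m) (h2 : m ≤ bdl ends s p C st v) :
    ∃ w, bdl ends s p C st w = m ∧ Reach ends X u w := by
  revert h1
  induction h using Relation.ReflTransGen.head_induction_on with
  | refl => intro h1; exact ⟨v, by omega, .refl⟩
  | @head a c hadj hrest ih =>
    intro h1
    by_cases hc : bdl ends s p C st c ≤ m
    · obtain ⟨w, hw, hr⟩ := ih hc
      exact ⟨w, hw, Relation.ReflTransGen.head hadj hr⟩
    · obtain ⟨f, hf, hends⟩ := hadj
      have h3 : bdl ends s p C st c ≤ bdl ends s p C st a + 1 := edge_bdl hW hC hends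
      exact ⟨a, by omega, .refl⟩

lemma conn_two_bundles (hconn : ∀ u v : V, Reach ends (∅ : Set E) u v) {m : ℕ}
    (hm : m ≤ q) :
    ConnIn ends (bundleOf ends s p C st m ∪ bundleOf ends s p C st (m + 1)) := by
  have e1 : st m < st (m + 1) := stlt hW (by omega) (by omega)
  have e2 : st (m + 1) < st (m + 2) := stlt hW (by omega) (by omega)
  have e3 : st (m + 2) ≤ p + 2 := st_le_p2 hW (by omega)
  have e4 : st (m + 1 + 1) = st (m + 2) := rfl
  have hEq : bundleOf ends s p C st m ∪ bundleOf ends s p C st (m + 1) =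
      unionBlocks ends s p C (st m) (st (m + 2) - 1) := by
    unfold bundleOf
    ext v
    rw [Set.mem_union, mem_unionBlocks_iff hC (by omega), mem_unionBlocks_iff hC (by omega),
      mem_unionBlocks_iff hC (by omega)]
    omega
  rw [hEq]
  rcases Nat.eq_zero_or_pos m with rfl | hm1
  · have h0 : ConnIn ends (unionBlocks ends s p C (st 0) (st 0)) := by
      rw [hW.1, union_single hC (by omega)]
      exact conn0 hC
    exact ext_iter hC hconn h0 le_rfl _ (by omega) (by omega)
  · rcases hW.2.2.2.2 m (by omega) (by omega) with ⟨hst1, hcb⟩ | ⟨-, -, h3⟩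
    · have h0 : ConnIn ends (unionBlocks ends s p C (st m) (st m)) := by
        rw [union_single hC (by omega)]
        exact hcb
      exact ext_iter hC hconn h0 le_rfl _ (by omega) (by omega)
    · have h4 := h3 (st (m + 2) - 1) (by omega) (by omega)
      unfold bundleOf at h4
      exact h4

end Bundles

section Key

variable [Fintype V] [Fintype E] {ends : E → Sym2 V} {s t : V} {p : ℕ} {C : ℕ → Set E}
  {q : ℕ} {st : ℕ → ℕ} {Z : Set E}

lemma ends_pair {f : E} {x y : V} (h : ends f = s(x, y)) :
    (ep1 ends f = x ∧ ep2 ends f = y) ∨ (ep1 ends f = y ∧ ep2 ends f = x) :=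
  Sym2.eq_iff.mp ((ep_spec ends f).symm.trans h)

lemma mem_cN_self {W : Set V} {v : V} (h : v ∈ W) : v ∈ closedNbhd ends W :=
  Set.mem_union_left _ h

lemma mem_cN_edge {W : Set V} {w x : V} {f : E} (hw : w ∈ W) (hf : ends f = s(w, x)) :
    x ∈ closedNbhd ends W :=
  Set.mem_union_right _ ⟨w, hw, f, hf⟩

variable (hC : CanonSeq ends s t p C) (hW : IsBundleSeq ends s p C q st)
  (hconn : ∀ u v : V, Reach ends (∅ : Set E) u v)
include hC hW hconn

lemma stretch_cond {i j : ℕ} (hj : j ≤ q + 1) {f : E} {x y : V} (h : ends f = s(x, y))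
    (hx : i ≤ bdl ends s p C st x ∧ bdl ends s p C st x ≤ j)
    (hy : i ≤ bdl ends s p C st y ∧ bdl ends s p C st y ≤ j) :
    ∀ w ∈ ends f, w ∈ stretchSet ends s p C st i j := by
  intro w hw
  rw [h] at hw
  rcases Sym2.mem_iff.mp hw with rfl | rfl
  · exact (mem_stretch hW hC hj).mpr hx
  · exact (mem_stretch hW hC hj).mpr hy

lemma unaffected_right {i j l : ℕ} (hli : i ≤ l) (hlj : l ≤ j) (hjq : j ≤ q)
    (hLeft : i = 0 ∨ Unaffected ends Z (bundleOf ends s p C st (i - 1)))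
    (hRight : Unaffected ends Z (bundleOf ends s p C st (j + 1)))
    (hA : ∀ e ∈ Z, (∀ w ∈ ends e, w ∈ stretchSet ends s p C st i j) →
      ¬ (bdl ends s p C st (ep1 ends e) = l ∨ bdl ends s p C st (ep2 ends e) = l))
    (hB : ∀ e ∈ Z, (∀ w ∈ ends e, w ∈ stretchSet ends s p C st i j) →
      ¬ (bdl ends s p C st (ep1 ends e) = l + 1 ∧ bdl ends s p C st (ep2 ends e) = l + 1)) :
    Unaffected ends Z (bundleOf ends s p C st l) := by
  have hA' : ∀ f ∈ Z, ∀ x y : V, ends f = s(x, y) →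
      (i ≤ bdl ends s p C st x ∧ bdl ends s p C st x ≤ j) →
      (i ≤ bdl ends s p C st y ∧ bdl ends s p C st y ≤ j) →
      ¬ (bdl ends s p C st x = l ∨ bdl ends s p C st y = l) := by
    intro f hf x y hxy hx hy hc
    refine hA f hf (stretch_cond hC hW hconn (by omega) hxy hx hy) ?_
    rcases ends_pair hxy with ⟨h1, h2⟩ | ⟨h1, h2⟩ <;> rw [h1, h2] <;> tauto
  have hB' : ∀ f ∈ Z, ∀ x y : V, ends f = s(x, y) →
      (i ≤ bdl ends s p C st x ∧ bdl ends s p C st x ≤ j) →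
      (i ≤ bdl ends s p C st y ∧ bdl ends s p C st y ≤ j) →
      ¬ (bdl ends s p C st x = l + 1 ∧ bdl ends s p C st y = l + 1) := by
    intro f hf x y hxy hx hy hc
    refine hB f hf (stretch_cond hC hW hconn (by omega) hxy hx hy) ?_
    rcases ends_pair hxy with ⟨h1, h2⟩ | ⟨h1, h2⟩ <;> rw [h1, h2] <;> tauto
  have hUconn : ConnIn ends (bundleOf ends s p C st l ∪ bundleOf ends s p C st (l + 1)) :=
    conn_two_bundles hW hC hconn (by omega)
  have hmemU : ∀ v : V, v ∈ bundleOf ends s p C st l ∪ bundleOf ends s p C st (l + 1) ↔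
      (bdl ends s p C st v = l ∨ bdl ends s p C st v = l + 1) := by
    intro v
    rw [Set.mem_union, mem_bundleOf hW hC (by omega), mem_bundleOf hW hC (by omega)]
  -- edges inside U can be bypassed
  have hedge : ∀ f ∈ Z, ∀ x y : V, ends f = s(x, y) →
      x ∈ bundleOf ends s p C st l ∪ bundleOf ends s p C st (l + 1) →
      y ∈ bundleOf ends s p C st l ∪ bundleOf ends s p C st (l + 1) →
      Reach ends Z x y := by
    intro f hf x y hxy hxU hyU
    rw [hmemU] at hxU hyU
    by_cases hcase : bdl ends s p C st x = l + 1 ∧ bdl ends s p C st y = l + 1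
    · -- both in W_{l+1}
      by_cases hlj' : l < j
      · exact absurd hcase (hB' f hf x y hxy (by omega) (by omega))
      · -- l = j : both in N[W_{j+1}]
        have hle : l = j := by omega
        have hx1 : x ∈ bundleOf ends s p C st (j + 1) :=
          (mem_bundleOf hW hC (by omega)).mpr (by omega)
        have hy1 : y ∈ bundleOf ends s p C st (j + 1) :=
          (mem_bundleOf hW hC (by omega)).mpr (by omega)
        exact hRight x (mem_cN_self hx1) y (mem_cN_self hy1)
    · -- some endpoint in W_l
      by_cases hcase2 : bdl ends s p C st x ≤ j ∧ bdl ends s p C st y ≤ j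
      · exact absurd (by omega) (hA' f hf x y hxy (by omega) (by omega))
      · -- l = j and f crosses from W_j to W_{j+1}
        have hle : l = j := by omega
        rcases (show bdl ends s p C st x = j + 1 ∨ bdl ends s p C st y = j + 1 by omega) with
          h1 | h1
        · have hx1 : x ∈ bundleOf ends s p C st (j + 1) :=
            (mem_bundleOf hW hC (by omega)).mpr h1
          exact hRight x (mem_cN_self hx1) y (mem_cN_edge hx1 hxy)
        · have hy1 : y ∈ bundleOf ends s p C st (j + 1) :=
            (mem_bundleOf hW hC (by omega)).mpr h1
          exact hRight x (mem_cN_edge hy1 (by rw [hxy, Sym2.eq_swap])) y (mem_cN_self hy1)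
  have RC : ∀ u ∈ bundleOf ends s p C st l ∪ bundleOf ends s p C st (l + 1),
      ∀ v ∈ bundleOf ends s p C st l ∪ bundleOf ends s p C st (l + 1), Reach ends Z u v :=
    fun u hu v hv => relay hUconn hedge hu hv
  obtain ⟨w₀, hw₀⟩ := bundle_nonempty hW hC hconn (show l ≤ q + 1 by omega)
  have hw₀U : w₀ ∈ bundleOf ends s p C st l ∪ bundleOf ends s p C st (l + 1) :=
    (hmemU w₀).mpr (Or.inl hw₀)
  have claim : ∀ x ∈ closedNbhd ends (bundleOf ends s p C st l), Reach ends Z w₀ x := by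
    intro x hx
    rcases hx with hxW | ⟨w, hwW, f, hf⟩
    · exact RC w₀ hw₀U x (Set.mem_union_left _ hxW)
    · have hbw : bdl ends s p C st w = l := (mem_bundleOf hW hC (by omega)).mp hwW
      have h1 : bdl ends s p C st x ≤ l + 1 := by
        have := edge_bdl hW hC hf; omega
      have h2 : l ≤ bdl ends s p C st x + 1 := by
        have := edge_bdl hW hC (show ends f = s(x, w) by rw [hf, Sym2.eq_swap]); omega
      by_cases hxU : bdl ends s p C st x = l ∨ bdl ends s p C st x = l + 1
      · exact RC w₀ hw₀U x ((hmemU x).mpr hxU)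
      · have hxl : bdl ends s p C st x + 1 = l := by omega
        by_cases hfZ : f ∈ Z
        · by_cases hil : i < l
          · exact absurd (by omega)
              (hA' f hfZ w x hf (by omega) (by omega)).elim
          · -- l = i ≥ 1
            rcases hLeft with h0 | hUnL
            · omega
            · have hx_mem : x ∈ bundleOf ends s p C st (i - 1) :=
                (mem_bundleOf hW hC (by omega)).mpr (by omega)
              have hw_in : w ∈ closedNbhd ends (bundleOf ends s p C st (i - 1)) :=
                mem_cN_edge hx_mem (by rw [hf, Sym2.eq_swap])
              have hr1 : Reach ends Z x w := hUnL x (mem_cN_self hx_mem) w hw_in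
              exact reach_trans (RC w₀ hw₀U w (Set.mem_union_left _ hwW)) (reach_symm hr1)
        · exact (RC w₀ hw₀U w (Set.mem_union_left _ hwW)).tail ⟨f, hfZ, hf⟩
  intro u hu v hv
  exact reach_trans (reach_symm (claim u hu)) (claim v hv)

lemma unaffected_left {i j l : ℕ} (hli : i ≤ l) (hlj : l ≤ j) (hi1 : 1 ≤ i) (hjq : j ≤ q + 1)
    (hLeft : Unaffected ends Z (bundleOf ends s p C st (i - 1)))
    (hRight : j = q + 1 ∨ Unaffected ends Z (bundleOf ends s p C st (j + 1)))
    (hA : ∀ e ∈ Z, (∀ w ∈ ends e, w ∈ stretchSet ends s p C st i j) →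
      ¬ (bdl ends s p C st (ep1 ends e) = l ∨ bdl ends s p C st (ep2 ends e) = l))
    (hB : ∀ e ∈ Z, (∀ w ∈ ends e, w ∈ stretchSet ends s p C st i j) →
      ¬ (bdl ends s p C st (ep1 ends e) = l - 1 ∧ bdl ends s p C st (ep2 ends e) = l - 1)) :
    Unaffected ends Z (bundleOf ends s p C st l) := by
  have hA' : ∀ f ∈ Z, ∀ x y : V, ends f = s(x, y) →
      (i ≤ bdl ends s p C st x ∧ bdl ends s p C st x ≤ j) →
      (i ≤ bdl ends s p C st y ∧ bdl ends s p C st y ≤ j) →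
      ¬ (bdl ends s p C st x = l ∨ bdl ends s p C st y = l) := by
    intro f hf x y hxy hx hy hc
    refine hA f hf (stretch_cond hC hW hconn (by omega) hxy hx hy) ?_
    rcases ends_pair hxy with ⟨h1, h2⟩ | ⟨h1, h2⟩ <;> rw [h1, h2] <;> tauto
  have hB' : ∀ f ∈ Z, ∀ x y : V, ends f = s(x, y) →
      (i ≤ bdl ends s p C st x ∧ bdl ends s p C st x ≤ j) →
      (i ≤ bdl ends s p C st y ∧ bdl ends s p C st y ≤ j) →
      ¬ (bdl ends s p C st x = l - 1 ∧ bdl ends s p C st y = l - 1) := by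
    intro f hf x y hxy hx hy hc
    refine hB f hf (stretch_cond hC hW hconn (by omega) hxy hx hy) ?_
    rcases ends_pair hxy with ⟨h1, h2⟩ | ⟨h1, h2⟩ <;> rw [h1, h2] <;> tauto
  have hl1 : 1 ≤ l := by omega
  have hUconn : ConnIn ends (bundleOf ends s p C st (l - 1) ∪ bundleOf ends s p C st l) := by
    have := conn_two_bundles hW hC hconn (show l - 1 ≤ q by omega)
    have he : l - 1 + 1 = l := by omega
    rw [he] at this
    exact this
  have hmemU : ∀ v : V, v ∈ bundleOf ends s p C st (l - 1) ∪ bundleOf ends s p C st l ↔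
      (bdl ends s p C st v = l - 1 ∨ bdl ends s p C st v = l) := by
    intro v
    rw [Set.mem_union, mem_bundleOf hW hC (by omega), mem_bundleOf hW hC (by omega)]
  have hedge : ∀ f ∈ Z, ∀ x y : V, ends f = s(x, y) →
      x ∈ bundleOf ends s p C st (l - 1) ∪ bundleOf ends s p C st l →
      y ∈ bundleOf ends s p C st (l - 1) ∪ bundleOf ends s p C st l →
      Reach ends Z x y := by
    intro f hf x y hxy hxU hyU
    rw [hmemU] at hxU hyU
    by_cases hcase : bdl ends s p C st x = l - 1 ∧ bdl ends s p C st y = l - 1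
    · by_cases hli' : i < l
      · exact absurd hcase (hB' f hf x y hxy (by omega) (by omega))
      · -- l = i : both in W_{i-1} ⊆ N[W_{i-1}]
        have hx1 : x ∈ bundleOf ends s p C st (i - 1) :=
          (mem_bundleOf hW hC (by omega)).mpr (by omega)
        have hy1 : y ∈ bundleOf ends s p C st (i - 1) :=
          (mem_bundleOf hW hC (by omega)).mpr (by omega)
        exact hLeft x (mem_cN_self hx1) y (mem_cN_self hy1)
    · by_cases hcase2 : i ≤ bdl ends s p C st x ∧ i ≤ bdl ends s p C st y
      · exact absurd (by omega) (hA' f hf x y hxy (by omega) (by omega))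
      · -- l = i and f crosses from W_{i-1} to W_i
        have hle : l = i := by omega
        rcases (show bdl ends s p C st x = i - 1 ∨ bdl ends s p C st y = i - 1 by omega) with
          h1 | h1
        · have hx1 : x ∈ bundleOf ends s p C st (i - 1) :=
            (mem_bundleOf hW hC (by omega)).mpr h1
          exact hLeft x (mem_cN_self hx1) y (mem_cN_edge hx1 hxy)
        · have hy1 : y ∈ bundleOf ends s p C st (i - 1) :=
            (mem_bundleOf hW hC (by omega)).mpr h1
          exact hLeft x (mem_cN_edge hy1 (by rw [hxy, Sym2.eq_swap])) y (mem_cN_self hy1)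
  have RC : ∀ u ∈ bundleOf ends s p C st (l - 1) ∪ bundleOf ends s p C st l,
      ∀ v ∈ bundleOf ends s p C st (l - 1) ∪ bundleOf ends s p C st l, Reach ends Z u v :=
    fun u hu v hv => relay hUconn hedge hu hv
  obtain ⟨w₀, hw₀⟩ := bundle_nonempty hW hC hconn (show l ≤ q + 1 by omega)
  have hw₀U : w₀ ∈ bundleOf ends s p C st (l - 1) ∪ bundleOf ends s p C st l :=
    (hmemU w₀).mpr (Or.inr hw₀)
  have claim : ∀ x ∈ closedNbhd ends (bundleOf ends s p C st l), Reach ends Z w₀ x := by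
    intro x hx
    rcases hx with hxW | ⟨w, hwW, f, hf⟩
    · exact RC w₀ hw₀U x (Set.mem_union_right _ hxW)
    · have hbw : bdl ends s p C st w = l := (mem_bundleOf hW hC (by omega)).mp hwW
      have h1 : bdl ends s p C st x ≤ l + 1 := by
        have := edge_bdl hW hC hf; omega
      have h2 : l ≤ bdl ends s p C st x + 1 := by
        have := edge_bdl hW hC (show ends f = s(x, w) by rw [hf, Sym2.eq_swap]); omega
      by_cases hxU : bdl ends s p C st x = l - 1 ∨ bdl ends s p C st x = l
      · exact RC w₀ hw₀U x ((hmemU x).mpr hxU)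
      · have hxl : bdl ends s p C st x = l + 1 := by omega
        by_cases hfZ : f ∈ Z
        · by_cases hjl : l < j
          · exact absurd (by omega)
              (hA' f hfZ w x hf (by omega) (by omega)).elim
          · -- l = j
            have hble := bdl_le hW (C := C) (s := s) (p := p) (ends := ends) x
            rcases hRight with h0 | hUnR
            · omega
            · have hx_mem : x ∈ bundleOf ends s p C st (j + 1) :=
                (mem_bundleOf hW hC (by omega)).mpr (by omega)
              have hw_in : w ∈ closedNbhd ends (bundleOf ends s p C st (j + 1)) :=
                mem_cN_edge hx_mem (by rw [hf, Sym2.eq_swap])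
              have hr1 : Reach ends Z x w := hUnR x (mem_cN_self hx_mem) w hw_in
              exact reach_trans (RC w₀ hw₀U w (Set.mem_union_right _ hwW)) (reach_symm hr1)
        · exact (RC w₀ hw₀U w (Set.mem_union_right _ hwW)).tail ⟨f, hfZ, hf⟩
  intro u hu v hv
  exact reach_trans (reach_symm (claim u hu)) (claim v hv)

end Key

section Count

variable [Fintype V] [Fintype E] {ends : E → Sym2 V} {s t : V} {p : ℕ} {C : ℕ → Set E}
  {q : ℕ} {st : ℕ → ℕ} {Z : Set E}

variable (hC : CanonSeq ends s t p C) (hW : IsBundleSeq ends s p C q st)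
  (hconn : ∀ u v : V, Reach ends (∅ : Set E) u v)
include hC hW hconn

lemma edge_bdl_pair (e : E) :
    bdl ends s p C st (ep2 ends e) ≤ bdl ends s p C st (ep1 ends e) + 1 ∧
      bdl ends s p C st (ep1 ends e) ≤ bdl ends s p C st (ep2 ends e) + 1 :=
  ⟨edge_bdl hW hC (ep_spec ends e),
    edge_bdl hW hC (by rw [ep_spec ends e, Sym2.eq_swap])⟩

lemma count_stretch {i j : ℕ} (P3 : ℕ → ℕ → Prop)
    (hP3 : ∀ l1 l2 A : ℕ, P3 l1 A → P3 l2 A → l1 = l2) (hij : i ≤ j)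
    (hKey : ∀ l : ℕ, i ≤ l → l ≤ j → ∃ etg : E × Bool,
      etg.1 ∈ {e | e ∈ Z ∧ ∀ w ∈ ends e, w ∈ stretchSet ends s p C st i j} ∧
      ((etg.2 = true ∧
          (bdl ends s p C st (ep1 ends etg.1) = l ∨ bdl ends s p C st (ep2 ends etg.1) = l) ∧
          l ≤ bdl ends s p C st (ep1 ends etg.1) ∧ l ≤ bdl ends s p C st (ep2 ends etg.1)) ∨
        (etg.2 = false ∧
          (bdl ends s p C st (ep1 ends etg.1) = l ∨ bdl ends s p C st (ep2 ends etg.1) = l) ∧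
          (bdl ends s p C st (ep1 ends etg.1) < l ∨ bdl ends s p C st (ep2 ends etg.1) < l)) ∨
        (etg.2 = false ∧
          bdl ends s p C st (ep1 ends etg.1) = bdl ends s p C st (ep2 ends etg.1) ∧
          P3 l (bdl ends s p C st (ep1 ends etg.1))))) :
    j - i + 1 ≤
      2 * {e | e ∈ Z ∧ ∀ w ∈ ends e, w ∈ stretchSet ends s p C st i j}.ncard := by
  set F := {e | e ∈ Z ∧ ∀ w ∈ ends e, w ∈ stretchSet ends s p C st i j} with hF
  obtain ⟨e₀, he₀, -⟩ := hKey i le_rfl hij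
  haveI : Inhabited (E × Bool) := ⟨e₀⟩
  classical
  set g : ℕ → E × Bool := fun l =>
    if h : i ≤ l ∧ l ≤ j then (hKey l h.1 h.2).choose else default with hg
  have hgspec : ∀ l : ℕ, i ≤ l → l ≤ j → (g l).1 ∈ F ∧
      (((g l).2 = true ∧
          (bdl ends s p C st (ep1 ends (g l).1) = l ∨ bdl ends s p C st (ep2 ends (g l).1) = l) ∧
          l ≤ bdl ends s p C st (ep1 ends (g l).1) ∧ l ≤ bdl ends s p C st (ep2 ends (g l).1)) ∨
        ((g l).2 = false ∧
          (bdl ends s p C st (ep1 ends (g l).1) = l ∨ bdl ends s p C st (ep2 ends (g l).1) = l) ∧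
          (bdl ends s p C st (ep1 ends (g l).1) < l ∨ bdl ends s p C st (ep2 ends (g l).1) < l)) ∨
        ((g l).2 = false ∧
          bdl ends s p C st (ep1 ends (g l).1) = bdl ends s p C st (ep2 ends (g l).1) ∧
          P3 l (bdl ends s p C st (ep1 ends (g l).1)))) := by
    intro l h1 h2
    have : g l = (hKey l h1 h2).choose := by rw [hg]; simp [h1, h2]
    rw [this]
    exact (hKey l h1 h2).choose_spec
  have hinj : Set.InjOn g ↑(Finset.Icc i j) := by
    intro l1 hl1 l2 hl2 heq
    simp only [Finset.coe_Icc, Set.mem_Icc] at hl1 hl2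
    obtain ⟨hf1, hsp1⟩ := hgspec l1 hl1.1 hl1.2
    obtain ⟨hf2, hsp2⟩ := hgspec l2 hl2.1 hl2.2
    rw [heq] at hsp1
    obtain ⟨hd1, hd2⟩ := edge_bdl_pair hC hW hconn (g l2).1
    rcases hsp1 with ⟨ht1, ha1, hm1⟩ | ⟨ht1, ha1, hm1⟩ | ⟨ht1, ha1, hm1⟩ <;>
      rcases hsp2 with ⟨ht2, ha2, hm2⟩ | ⟨ht2, ha2, hm2⟩ | ⟨ht2, ha2, hm2⟩ <;>
      first
        | omega
        | exact hP3 l1 l2 _ hm1 hm2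
        | exact absurd (ht1.symm.trans ht2) (by decide)
  have hmaps : ∀ l ∈ Finset.Icc i j,
      g l ∈ (F.toFinite.toFinset ×ˢ (Finset.univ : Finset Bool)) := by
    intro l hl
    rw [Finset.mem_Icc] at hl
    rw [Finset.mem_product]
    exact ⟨(Set.Finite.mem_toFinset _).mpr (hgspec l hl.1 hl.2).1, Finset.mem_univ _⟩
  have hcard := Finset.card_le_card_of_injOn g hmaps hinj
  rw [Finset.card_product, Nat.card_Icc] at hcard
  have h2 : (Finset.univ : Finset Bool).card = 2 := by simp
  rw [h2] at hcard
  have h3 : F.toFinite.toFinset.card = F.ncard := (Set.ncard_eq_toFinset_card F F.toFinite).symm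
  omega

lemma count_right {i j : ℕ} (hij : i ≤ j) (hjq : j ≤ q)
    (haff : ∀ l : ℕ, i ≤ l → l ≤ j → ¬ Unaffected ends Z (bundleOf ends s p C st l))
    (hLeft : i = 0 ∨ Unaffected ends Z (bundleOf ends s p C st (i - 1)))
    (hRight : Unaffected ends Z (bundleOf ends s p C st (j + 1))) :
    j - i + 1 ≤
      2 * {e | e ∈ Z ∧ ∀ w ∈ ends e, w ∈ stretchSet ends s p C st i j}.ncard := by
  classical
  refine count_stretch hC hW hconn (fun l A => A = l + 1) (by omega) hij ?_
  intro l h1 h2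
  by_cases hT : ∃ e, (e ∈ Z ∧ ∀ w ∈ ends e, w ∈ stretchSet ends s p C st i j) ∧
      (bdl ends s p C st (ep1 ends e) = l ∨ bdl ends s p C st (ep2 ends e) = l)
  · obtain ⟨e, heF, htouch⟩ := hT
    by_cases hm : l ≤ bdl ends s p C st (ep1 ends e) ∧ l ≤ bdl ends s p C st (ep2 ends e)
    · exact ⟨(e, true), heF, Or.inl ⟨rfl, htouch, hm.1, hm.2⟩⟩
    · exact ⟨(e, false), heF, Or.inr (Or.inl ⟨rfl, htouch,
        (by omega : bdl ends s p C st (ep1 ends e) < l ∨ bdl ends s p C st (ep2 ends e) < l)⟩)⟩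
  · by_cases hI : ∃ e, (e ∈ Z ∧ ∀ w ∈ ends e, w ∈ stretchSet ends s p C st i j) ∧
        (bdl ends s p C st (ep1 ends e) = l + 1 ∧ bdl ends s p C st (ep2 ends e) = l + 1)
    · obtain ⟨e, heF, hin⟩ := hI
      exact ⟨(e, false), heF, Or.inr (Or.inr ⟨rfl,
        (by omega : bdl ends s p C st (ep1 ends e) = bdl ends s p C st (ep2 ends e)), hin.1⟩)⟩
    · exfalso
      refine haff l h1 h2 (unaffected_right hC hW hconn h1 h2 hjq hLeft hRight ?_ ?_)
      · intro e he hst hc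
        exact hT ⟨e, ⟨he, hst⟩, hc⟩
      · intro e he hst hc
        exact hI ⟨e, ⟨he, hst⟩, hc⟩

lemma count_left {i j : ℕ} (hij : i ≤ j) (hi1 : 1 ≤ i) (hjq : j ≤ q + 1)
    (haff : ∀ l : ℕ, i ≤ l → l ≤ j → ¬ Unaffected ends Z (bundleOf ends s p C st l))
    (hLeft : Unaffected ends Z (bundleOf ends s p C st (i - 1)))
    (hRight : j = q + 1 ∨ Unaffected ends Z (bundleOf ends s p C st (j + 1))) :
    j - i + 1 ≤
      2 * {e | e ∈ Z ∧ ∀ w ∈ ends e, w ∈ stretchSet ends s p C st i j}.ncard := by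
  classical
  refine count_stretch hC hW hconn (fun l A => A + 1 = l) (by omega) hij ?_
  intro l h1 h2
  by_cases hT : ∃ e, (e ∈ Z ∧ ∀ w ∈ ends e, w ∈ stretchSet ends s p C st i j) ∧
      (bdl ends s p C st (ep1 ends e) = l ∨ bdl ends s p C st (ep2 ends e) = l)
  · obtain ⟨e, heF, htouch⟩ := hT
    by_cases hm : l ≤ bdl ends s p C st (ep1 ends e) ∧ l ≤ bdl ends s p C st (ep2 ends e)
    · exact ⟨(e, true), heF, Or.inl ⟨rfl, htouch, hm.1, hm.2⟩⟩
    · exact ⟨(e, false), heF, Or.inr (Or.inl ⟨rfl, htouch,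
        (by omega : bdl ends s p C st (ep1 ends e) < l ∨ bdl ends s p C st (ep2 ends e) < l)⟩)⟩
  · by_cases hI : ∃ e, (e ∈ Z ∧ ∀ w ∈ ends e, w ∈ stretchSet ends s p C st i j) ∧
        (bdl ends s p C st (ep1 ends e) = l - 1 ∧ bdl ends s p C st (ep2 ends e) = l - 1)
    · obtain ⟨e, heF, hin⟩ := hI
      exact ⟨(e, false), heF, Or.inr (Or.inr ⟨rfl,
        (by omega : bdl ends s p C st (ep1 ends e) = bdl ends s p C st (ep2 ends e)),
        (by omega : bdl ends s p C st (ep1 ends e) + 1 = l)⟩)⟩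
    · exfalso
      refine haff l h1 h2 (unaffected_left hC hW hconn h1 h2 hi1 hjq hLeft hRight ?_ ?_)
      · intro e he hst hc
        exact hT ⟨e, ⟨he, hst⟩, hc⟩
      · intro e he hst hc
        exact hI ⟨e, ⟨he, hst⟩, hc⟩

end Count

/-- Let `Z` be a special `(s,t)`-cut with strongly affected stretch
`W_{a,b}`.  (1) Unaffected bundles before `W_a` lie in `R_s(Z)`; (2) unaffected bundles
after `W_b` lie in `R_t(Z)`; (3) a maximal affected stretch `W_{i,j}` with `j < a` has
both interfaces in `R_s(Z)` and `j - i + 1 ≤ 2·|Z ∩ W_{i,j}|`; (4) symmetrically with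
`R_t(Z)` for `i > b`. -/
theorem nonstrong_stretches_structure {V E : Type} [Fintype V] [Fintype E]
    (ends : E → Sym2 V) (hloop : ∀ e, ¬ (ends e).IsDiag)
    (hconn : ∀ u v : V, Reach ends (∅ : Set E) u v)
    (s t : V) (hst : s ≠ t)
    (p : ℕ) (C : ℕ → Set E) (hC : CanonSeq ends s t p C)
    (q : ℕ) (st : ℕ → ℕ) (hW : IsBundleSeq ends s p C q st)
    (Z : Set E) (hZ : IsSpecial ends s t Z)
    (a b : ℕ) (hab : StronglyAffStretch ends s t p C st q Z a b) :
    (∀ i : ℕ, i < a → Unaffected ends Z (bundleOf ends s p C st i) →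
        bundleOf ends s p C st i ⊆ RS ends Z {s}) ∧
    (∀ i : ℕ, b < i → i ≤ q + 1 → Unaffected ends Z (bundleOf ends s p C st i) →
        bundleOf ends s p C st i ⊆ RS ends Z {t}) ∧
    (∀ i j : ℕ, MaxAffStretch ends s p C st q Z i j → j < a →
        leftInterface ends s p C st i ⊆ RS ends Z {s} ∧
        rightInterface ends s t p C st q j ⊆ RS ends Z {s} ∧
        j - i + 1 ≤
          2 * {e | e ∈ Z ∧ ∀ v ∈ ends e, v ∈ stretchSet ends s p C st i j}.ncard) ∧
    (∀ i j : ℕ, MaxAffStretch ends s p C st q Z i j → b < i →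
        leftInterface ends s p C st i ⊆ RS ends Z {t} ∧
        rightInterface ends s t p C st q j ⊆ RS ends Z {t} ∧
        j - i + 1 ≤
          2 * {e | e ∈ Z ∧ ∀ v ∈ ends e, v ∈ stretchSet ends s p C st i j}.ncard) := by
  obtain ⟨⟨hab1, hab2, habaff, habL, habR⟩, hne_s, hne_t⟩ := hab
  obtain ⟨xs, hxs_st, hxs_s⟩ := hne_s
  obtain ⟨xt, hxt_st, hxt_t⟩ := hne_t
  have hbxs : a ≤ bdl ends s p C st xs ∧ bdl ends s p C st xs ≤ b :=
    (mem_stretch hW hC hab2).mp hxs_st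
  have hbxt : a ≤ bdl ends s p C st xt ∧ bdl ends s p C st xt ≤ b :=
    (mem_stretch hW hC hab2).mp hxt_st
  have hrs : Reach ends Z s xs := mem_RS.mp hxs_s
  have hrt : Reach ends Z t xt := mem_RS.mp hxt_t
  have hbs : bdl ends s p C st s = 0 := bdl_s hW
  have hbt : bdl ends s p C st t = q + 1 := bdl_t hW hC
  -- if a bundle left of `a` is unaffected, its whole closed neighborhood is in R_s(Z)
  have reachS : ∀ m : ℕ, m < a → Unaffected ends Z (bundleOf ends s p C st m) →
      ∀ v ∈ closedNbhd ends (bundleOf ends s p C st m), v ∈ RS ends Z {s} := by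
    intro m hma hUn v hvc
    obtain ⟨w, hw, hrw⟩ := reach_cross hW hC (m := m) hrs (by omega) (by omega)
    have hwW : w ∈ bundleOf ends s p C st m := (mem_bundleOf hW hC (by omega)).mpr hw
    exact mem_RS.mpr (reach_trans hrw (hUn w (mem_cN_self hwW) v hvc))
  have reachT : ∀ m : ℕ, b < m → m ≤ q + 1 → Unaffected ends Z (bundleOf ends s p C st m) →
      ∀ v ∈ closedNbhd ends (bundleOf ends s p C st m), v ∈ RS ends Z {t} := by
    intro m hbm hmq hUn v hvc
    obtain ⟨w, hw, hrw⟩ := reach_cross hW hC (m := m) (reach_symm hrt) (by omega) (by omega)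
    have hwW : w ∈ bundleOf ends s p C st m := (mem_bundleOf hW hC (by omega)).mpr hw
    exact mem_RS.mpr (reach_trans (reach_trans hrt hrw) (hUn w (mem_cN_self hwW) v hvc))
  refine ⟨?_, ?_, ?_, ?_⟩
  · -- part (1)
    intro i hia hUn v hv
    exact reachS i hia hUn v (mem_cN_self hv)
  · -- part (2)
    intro i hbi hiq hUn v hv
    exact reachT i hbi hiq hUn v (mem_cN_self hv)
  · -- part (3)
    intro i j hmax hja
    obtain ⟨hij, hjq1, haff, hL, hR⟩ := hmax
    have hjq : j ≤ q := by omega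
    have hRu : Unaffected ends Z (bundleOf ends s p C st (j + 1)) := by
      rcases hR with h | h
      · omega
      · exact h
    have hj1a : j + 1 < a := by
      rcases (show j + 1 < a ∨ j + 1 = a by omega) with h | h
      · exact h
      · exact absurd (h ▸ hRu) (habaff a le_rfl hab1)
    refine ⟨?_, ?_, count_right hC hW hconn hij hjq haff hL hRu⟩
    · unfold leftInterface
      split_ifs with h0
      · intro v hv
        rcases hv with rfl
        exact mem_RS.mpr .refl
      · rintro v ⟨hvW, e, he, hve⟩
        unfold interCut at he
        have heq1 : i - 1 + 1 = i := by omega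
        rw [heq1] at he
        have hstip : st i ≤ p + 1 := st_le_p1 hW (by omega)
        have hsti1 : 1 ≤ st i := st_pos hW (by omega) (by omega)
        obtain ⟨x, y, hxy, hbx, hby⟩ := crossing hC (st i - 1) (by omega) he
        have hbx' : bdl ends s p C st x = i - 1 := by
          refine (bdl_eq_iff hW (by omega)).mpr ⟨?_, ?_⟩
          · have := stlt hW (show i - 1 < i by omega) (by omega); omega
          · have heq2 : i - 1 + 1 = i := by omega
            rw [heq2]; omega
        have hby' : bdl ends s p C st y = i := by
          refine (bdl_eq_iff hW (by omega)).mpr ⟨by omega, ?_⟩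
          have := stlt hW (show i < i + 1 by omega) (by omega); omega
        have hbv : bdl ends s p C st v = i := (mem_bundleOf hW hC (by omega)).mp hvW
        have hvy : v = y := by
          rw [hxy] at hve
          rcases Sym2.mem_iff.mp hve with rfl | rfl
          · exfalso; omega
          · rfl
        subst hvy
        have hUnL : Unaffected ends Z (bundleOf ends s p C st (i - 1)) := by
          rcases hL with h | h
          · omega
          · exact h
        exact reachS (i - 1) (by omega) hUnL v
          (mem_cN_edge ((mem_bundleOf hW hC (by omega)).mpr hbx') hxy)
    · unfold rightInterface
      split_ifs with h0
      · exact absurd h0 (by omega)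
      · rintro v ⟨hvW, e, he, hve⟩
        unfold interCut at he
        have hstip : st (j + 1) ≤ p + 1 := st_le_p1 hW (by omega)
        have hsti1 : 1 ≤ st (j + 1) := st_pos hW (by omega) (by omega)
        obtain ⟨x, y, hxy, hbx, hby⟩ := crossing hC (st (j + 1) - 1) (by omega) he
        have hbx' : bdl ends s p C st x = j := by
          refine (bdl_eq_iff hW (by omega)).mpr ⟨?_, by omega⟩
          have := stlt hW (show j < j + 1 by omega) (by omega); omega
        have hby' : bdl ends s p C st y = j + 1 := by
          refine (bdl_eq_iff hW (by omega)).mpr ⟨by omega, ?_⟩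
          have := stlt hW (show j + 1 < j + 2 by omega) (by omega)
          have heq3 : st (j + 1 + 1) = st (j + 2) := rfl
          omega
        have hbv : bdl ends s p C st v = j := (mem_bundleOf hW hC (by omega)).mp hvW
        have hvx : v = x := by
          rw [hxy] at hve
          rcases Sym2.mem_iff.mp hve with rfl | rfl
          · rfl
          · exfalso; omega
        subst hvx
        exact reachS (j + 1) hj1a hRu v
          (mem_cN_edge ((mem_bundleOf hW hC (by omega)).mpr hby')
            (by rw [hxy, Sym2.eq_swap]))
  · -- part (4)
    intro i j hmax hbi
    obtain ⟨hij, hjq1, haff, hL, hR⟩ := hmax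
    have hi1 : 1 ≤ i := by omega
    have hUnL : Unaffected ends Z (bundleOf ends s p C st (i - 1)) := by
      rcases hL with h | h
      · omega
      · exact h
    have hbi1 : b < i - 1 := by
      rcases (show b < i - 1 ∨ i - 1 = b by omega) with h | h
      · exact h
      · exact absurd (h ▸ hUnL) (habaff b hab1 le_rfl)
    refine ⟨?_, ?_, count_left hC hW hconn hij hi1 hjq1 haff hUnL hR⟩
    · unfold leftInterface
      split_ifs with h0
      · omega
      · rintro v ⟨hvW, e, he, hve⟩
        unfold interCut at he
        have heq1 : i - 1 + 1 = i := by omega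
        rw [heq1] at he
        have hstip : st i ≤ p + 1 := st_le_p1 hW (by omega)
        have hsti1 : 1 ≤ st i := st_pos hW (by omega) (by omega)
        obtain ⟨x, y, hxy, hbx, hby⟩ := crossing hC (st i - 1) (by omega) he
        have hbx' : bdl ends s p C st x = i - 1 := by
          refine (bdl_eq_iff hW (by omega)).mpr ⟨?_, ?_⟩
          · have := stlt hW (show i - 1 < i by omega) (by omega); omega
          · have heq2 : i - 1 + 1 = i := by omega
            rw [heq2]; omega
        have hby' : bdl ends s p C st y = i := by
          refine (bdl_eq_iff hW (by omega)).mpr ⟨by omega, ?_⟩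
          have := stlt hW (show i < i + 1 by omega) (by omega); omega
        have hbv : bdl ends s p C st v = i := (mem_bundleOf hW hC (by omega)).mp hvW
        have hvy : v = y := by
          rw [hxy] at hve
          rcases Sym2.mem_iff.mp hve with rfl | rfl
          · exfalso; omega
          · rfl
        subst hvy
        exact reachT (i - 1) hbi1 (by omega) hUnL v
          (mem_cN_edge ((mem_bundleOf hW hC (by omega)).mpr hbx') hxy)
    · unfold rightInterface
      split_ifs with h0
      · intro v hv
        rcases hv with rfl
        exact mem_RS.mpr .refl
      · rintro v ⟨hvW, e, he, hve⟩
        unfold interCut at he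
        have hjq : j ≤ q := by omega
        have hRu : Unaffected ends Z (bundleOf ends s p C st (j + 1)) := by
          rcases hR with h | h
          · omega
          · exact h
        have hstip : st (j + 1) ≤ p + 1 := st_le_p1 hW (by omega)
        have hsti1 : 1 ≤ st (j + 1) := st_pos hW (by omega) (by omega)
        obtain ⟨x, y, hxy, hbx, hby⟩ := crossing hC (st (j + 1) - 1) (by omega) he
        have hbx' : bdl ends s p C st x = j := by
          refine (bdl_eq_iff hW (by omega)).mpr ⟨?_, by omega⟩
          have := stlt hW (show j < j + 1 by omega) (by omega); omega
        have hby' : bdl ends s p C st y = j + 1 := by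
          refine (bdl_eq_iff hW (by omega)).mpr ⟨by omega, ?_⟩
          have := stlt hW (show j + 1 < j + 2 by omega) (by omega)
          have heq3 : st (j + 1 + 1) = st (j + 2) := rfl
          omega
        have hbv : bdl ends s p C st v = j := (mem_bundleOf hW hC (by omega)).mp hvW
        have hvx : v = x := by
          rw [hxy] at hve
          rcases Sym2.mem_iff.mp hve with rfl | rfl
          · rfl
          · exfalso; omega
        subst hvx
        exact reachT (j + 1) (by omega) (by omega) hRu v
          (mem_cN_edge ((mem_bundleOf hW hC (by omega)).mpr hby')
            (by rw [hxy, Sym2.eq_swap]))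


end FlowAug
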